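/- Let K be a field of characteristic 0, n ≥ 2, and take ℓ = n−1. If the restricted matching field ideal F_{n,n−1,w} is nonzero and monomial-free (i.e., w ∈ T_{n,n−1}), then w has the descending property, i.e. w ∈ S_n^>. -/

import Mathlib

open MvPolynomial

/-- Index type for the Plücker variables `P_J`: nonempty proper subsets of `{1,…,n}`
(encoded as `Fin n`, where `i : Fin n` stands for the value `i+1`). -/
abbrev PIdx (n : ℕ) := {J : Finset (Fin n) // J.Nonempty ∧ J ≠ Finset.univ}

/-- The transposition (1 2) acting on (1-based) row indices. -/
def swap12 (r : ℕ) : ℕ := if r = 1 then 2 else if r = 2 then 1 else r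

/-- The image of the Plücker variable `P_J` under the monomial map `φ_ℓ` associated to the
block diagonal matching field `B_ℓ`: writing `J = {j_1 < … < j_k}` (as 1-based values),
it is `sgn(σ)·x_{σ(1),j_1}⋯x_{σ(k),j_k}` where `σ = id` if `|J| = 1` or
`|J ∩ {1,…,ℓ}| ≥ 2`, and `σ = (1 2)` otherwise. Variables `x_{i,j}` are indexed by
pairs of 1-based natural numbers. -/
noncomputable def phiVal (K : Type*) [CommRing K] (n ℓ : ℕ) (J : Finset (Fin n)) :
    MvPolynomial (ℕ × ℕ) K :=
  let l : List ℕ := (J.sort (· ≤ ·)).map (fun j => (j : ℕ) + 1)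
  if J.card = 1 ∨ 2 ≤ (J.filter (fun j : Fin n => (j : ℕ) + 1 ≤ ℓ)).card then
    ((List.range l.length).map
      (fun r => (X (r + 1, l.getD r 0) : MvPolynomial (ℕ × ℕ) K))).prod
  else
    - ((List.range l.length).map
      (fun r => (X (swap12 (r + 1), l.getD r 0) : MvPolynomial (ℕ × ℕ) K))).prod

/-- The monomial map `φ_ℓ : K[P_J] → K[x_{i,j}]`. -/
noncomputable def phiMap (K : Type*) [CommRing K] (n ℓ : ℕ) :
    MvPolynomial (PIdx n) K →ₐ[K] MvPolynomial (ℕ × ℕ) K :=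
  aeval (fun J => phiVal K n ℓ J.1)

/-- The matching field ideal `F_{n,ℓ} = ker φ_ℓ`. -/
noncomputable def Fnl (K : Type*) [CommRing K] (n ℓ : ℕ) :
    Ideal (MvPolynomial (PIdx n) K) :=
  RingHom.ker (phiMap K n ℓ)

/-- Componentwise comparison `A ≤ B` of two finsets via their increasing enumerations. -/
def finsetLE {n : ℕ} (A B : Finset (Fin n)) : Prop :=
  List.Forall₂ (· ≤ ·) (A.sort (· ≤ ·)) (B.sort (· ≤ ·))

/-- The set `{w_1, …, w_k}` of the first `k` values of the one-line notation of `w`. -/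
def initSet {n : ℕ} (w : Equiv.Perm (Fin n)) (k : ℕ) : Finset (Fin n) :=
  (Finset.univ.filter (fun i : Fin n => (i : ℕ) < k)).image w

/-- `S_w`: the set of subsets `J` with `J ≰ {w_1,…,w_{|J|}}`. -/
def Sw {n : ℕ} (w : Equiv.Perm (Fin n)) : Set (Finset (Fin n)) :=
  {J | ¬ finsetLE J (initSet w J.card)}

/-- Index type for the Plücker variables that do not vanish on the Schubert variety `X(w)`. -/
abbrev RIdx (n : ℕ) (w : Equiv.Perm (Fin n)) := {J : PIdx n // J.1 ∉ Sw w}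

open Classical in
/-- The projection `π_w` sending `P_J ↦ 0` for `J ∈ S_w` and `P_J ↦ P_J` otherwise. -/
noncomputable def piw (K : Type*) [CommRing K] {n : ℕ} (w : Equiv.Perm (Fin n)) :
    MvPolynomial (PIdx n) K →ₐ[K] MvPolynomial (RIdx n w) K :=
  aeval (fun J => if h : J.1 ∈ Sw w then 0 else X (⟨J, h⟩ : RIdx n w))

/-- The restricted matching field ideal `F_{n,ℓ,w} = π_w(F_{n,ℓ})`. -/
noncomputable def Fnlw (K : Type*) [CommRing K] (n ℓ : ℕ) (w : Equiv.Perm (Fin n)) :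
    Ideal (MvPolynomial (RIdx n w) K) :=
  Ideal.map (piw K w) (Fnl K n ℓ)

/-- An ideal of a polynomial ring is monomial-free if it contains no (nonzero) monomial. -/
def MonomialFree {σ K : Type*} [CommSemiring K] (I : Ideal (MvPolynomial σ K)) : Prop :=
  ∀ m : σ →₀ ℕ, (monomial m (1 : K)) ∉ I

/-- The adjacent transposition `s_{i+1} = (i+1, i+2)` (1-based), i.e. the swap of the
0-based positions `i` and `i+1` of `Fin n`. -/
def adjT (n i : ℕ) : Equiv.Perm (Fin n) :=
  if h : i + 1 < n then Equiv.swap ⟨i, Nat.lt_of_succ_lt h⟩ ⟨i + 1, h⟩ else 1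

/-- `Z_n`: permutations that are products of adjacent transpositions with pairwise
distance at least 2 between the indices. -/
def Zset (n : ℕ) : Set (Equiv.Perm (Fin n)) :=
  {w | ∃ l : List ℕ, (∀ i ∈ l, i + 1 < n) ∧
        l.Pairwise (fun i j => i + 2 ≤ j ∨ j + 2 ≤ i) ∧
        w = (l.map (adjT n)).prod}

/-- `oneLine w i = w_i` : the `i`-th entry (1-based, with 1-based values) of the
one-line notation of `w`. -/
def oneLine {n : ℕ} (w : Equiv.Perm (Fin n)) (i : ℕ) : ℕ :=
  if h : i - 1 < n then (w ⟨i - 1, h⟩ : ℕ) + 1 else 0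

/-- The (1-based) position `t` with `w_t = n`. -/
def posOfTop {n : ℕ} (w : Equiv.Perm (Fin n)) : ℕ :=
  if h : 0 < n then ((w.symm ⟨n - 1, by omega⟩ : ℕ) + 1) else 0

/-- `deleteTop w u` holds iff `u = ul(w)` is obtained from `w` by deleting the entry `n`
from its one-line notation. -/
def deleteTop {n : ℕ} (w : Equiv.Perm (Fin n)) (u : Equiv.Perm (Fin (n - 1))) : Prop :=
  ∀ i, 1 ≤ i → i ≤ n - 1 →
    oneLine u i = if i < posOfTop w then oneLine w i else oneLine w (i + 1)

/-- The descending property: writing `w_t = n`, one has `w_t > w_{t+1} > … > w_n`. -/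
def descendingProp {n : ℕ} (w : Equiv.Perm (Fin n)) : Prop :=
  ∀ i, posOfTop w ≤ i → i < n → oneLine w (i + 1) < oneLine w i

/-- `T_{n,ℓ}`: the set of permutations `w` for which `F_{n,ℓ,w}` is nonzero and
monomial-free. -/
def Tset (K : Type*) [Field K] (n ℓ : ℕ) : Set (Equiv.Perm (Fin n)) :=
  {w | Fnlw K n ℓ w ≠ ⊥ ∧ MonomialFree (Fnlw K n ℓ w)}

/-- The one-line notation of `w` as a list of 1-based values. -/
def olList {n : ℕ} (w : Equiv.Perm (Fin n)) : List ℕ :=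
  (List.finRange n).map (fun i => (w i : ℕ) + 1)

/-- A list of naturals is 312-free if it has no subsequence of type 312. -/
def List312Free (l : List ℕ) : Prop :=
  ¬ ∃ i j k : ℕ, i < j ∧ j < k ∧ k < l.length ∧
      l.getD j 0 < l.getD k 0 ∧ l.getD k 0 < l.getD i 0

/-- The decreasing list `[a, a-1, …, 1]`. -/
def descTo1 (a : ℕ) : List ℕ := (List.range a).reverse.map (· + 1)

/-- The set `P_ℓ ⊆ S_n`. -/
def Pset (n ℓ : ℕ) : Set (Equiv.Perm (Fin n)) :=
  if ℓ = n then {w | List312Free (olList w)}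
  else
    {w | (¬ List312Free (olList w) →
            oneLine w 2 = ℓ ∧ oneLine w 2 < oneLine w 1 ∧
            List312Free ((olList w).erase ℓ)) ∧
         (∀ m, 3 ≤ m → m ≤ n →
            (olList w).filter (fun v => v ≤ m) = (m - 1) :: m :: descTo1 (m - 2) →
            oneLine w 1 < oneLine w 2 ∧ oneLine w 2 ≤ ℓ ∧
            (olList w).filter (fun v => v ≤ oneLine w 2) =
              oneLine w 1 :: oneLine w 2 ::
                ((descTo1 (oneLine w 2 - 1)).filter (fun v => v ≠ oneLine w 1)))}

/-- The set `A_1`. -/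
def A1set (n : ℕ) : Set (Equiv.Perm (Fin n)) :=
  {w | (∃ u : Equiv.Perm (Fin (n - 1)), deleteTop w u ∧ u ∈ Zset (n - 1)) ∧
       oneLine w n = n - 2 ∧
       ({oneLine w (n - 2), oneLine w (n - 1)} : Set ℕ) = {n - 1, n}}

/-- The set `A_2` (with `ul(w) ∈ T_{n-1,ℓ'}`). -/
def A2set (K : Type*) [Field K] (n ℓ' : ℕ) : Set (Equiv.Perm (Fin n)) :=
  {w | (∃ u : Equiv.Perm (Fin (n - 1)),
          deleteTop w u ∧ u ∈ Tset K (n - 1) ℓ' ∧ descendingProp u) ∧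
       (∀ s t, 1 ≤ s → s ≤ n → 1 ≤ t → t ≤ n →
          oneLine w s = n - 1 → oneLine w t = n → s - 1 ≤ t)}


open scoped List

namespace Stmt8Aux

variable {n : ℕ}


variable {n : ℕ}

/-- sort of insert of a maximal element appends. -/
lemma sort_insert_max {s : Finset (Fin n)} {a : Fin n} (h1 : ∀ b ∈ s, b ≤ a) (h2 : a ∉ s) :
    (insert a s).sort (· ≤ ·) = s.sort (· ≤ ·) ++ [a] := by
  refine (fun h1 h2 h3 => List.Perm.eq_of_pairwise' (r := (· ≤ ·)) h2 h3 h1) ?_ ?_ ?_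
  · calc (insert a s).sort (· ≤ ·) ~ (insert a s).toList := Finset.sort_perm_toList _ _
      _ ~ a :: s.toList := Finset.toList_insert h2
      _ ~ a :: s.sort (· ≤ ·) := List.Perm.cons a (Finset.sort_perm_toList _ _).symm
      _ ~ s.sort (· ≤ ·) ++ [a] := (List.perm_append_singleton a _).symm
  · exact Finset.pairwise_sort _ _
  · rw [List.pairwise_append]
    refine ⟨Finset.pairwise_sort _ _, List.pairwise_singleton _ _, ?_⟩
    intro x hx y hy
    rw [List.mem_singleton] at hy; subst hy
    exact h1 x (by simpa using hx)

lemma sort_insert_eq_orderedInsert {s : Finset (Fin n)} {b : Fin n} (h : b ∉ s) :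
    (insert b s).sort (· ≤ ·) = (s.sort (· ≤ ·)).orderedInsert (· ≤ ·) b := by
  refine (fun h1 h2 h3 => List.Perm.eq_of_pairwise' (r := (· ≤ ·)) h2 h3 h1) ?_ ?_ ?_
  · calc (insert b s).sort (· ≤ ·) ~ (insert b s).toList := Finset.sort_perm_toList _ _
      _ ~ b :: s.toList := Finset.toList_insert h
      _ ~ b :: s.sort (· ≤ ·) := List.Perm.cons b (Finset.sort_perm_toList _ _).symm
      _ ~ (s.sort (· ≤ ·)).orderedInsert (· ≤ ·) b := (List.perm_orderedInsert _ _ _).symm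
  · exact Finset.pairwise_sort _ _
  · exact List.Pairwise.orderedInsert _ _ (Finset.pairwise_sort _ _)

lemma forall2_shift (top : Fin n) :
    ∀ (l : List (Fin n)) (x : Fin n), List.Pairwise (· ≤ ·) (x :: l) →
      (∀ y ∈ x :: l, y ≤ top) → List.Forall₂ (· ≤ ·) (x :: l) (l ++ [top]) := by
  intro l
  induction l with
  | nil => intro x _ hb; exact List.Forall₂.cons (hb x (by simp)) List.Forall₂.nil
  | cons y ys ih =>
    intro x hs hb
    refine List.Forall₂.cons ?_ ?_
    · exact List.rel_of_pairwise_cons hs (by simp : y ∈ y :: ys)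
    · exact ih y hs.of_cons (fun z hz => hb z (List.mem_cons_of_mem _ hz))

lemma forall2_orderedInsert (top b : Fin n) (hb : b ≤ top) :
    ∀ l : List (Fin n), List.Pairwise (· ≤ ·) l → (∀ y ∈ l, y ≤ top) →
      List.Forall₂ (· ≤ ·) (l.orderedInsert (· ≤ ·) b) (l ++ [top]) := by
  intro l
  induction l with
  | nil => intro _ _; exact List.Forall₂.cons hb List.Forall₂.nil
  | cons x xs ih =>
    intro hs hbnd
    rw [List.orderedInsert]
    by_cases hbx : b ≤ x
    · rw [if_pos hbx]
      exact List.Forall₂.cons hbx (forall2_shift top xs x hs hbnd)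
    · rw [if_neg hbx]
      exact List.Forall₂.cons le_rfl
        (ih hs.of_cons (fun z hz => hbnd z (List.mem_cons_of_mem _ hz)))

lemma forall2_sum_le : ∀ {l₁ l₂ : List (Fin n)}, List.Forall₂ (· ≤ ·) l₁ l₂ →
    (l₁.map Fin.val).sum ≤ (l₂.map Fin.val).sum := by
  intro l₁ l₂ h
  induction h with
  | nil => simp
  | cons h _ ih => simpa using Nat.add_le_add h ih

lemma sort_sum (s : Finset (Fin n)) :
    (((s.sort (· ≤ ·)).map Fin.val).sum) = s.sum Fin.val := by
  rw [((Finset.sort_perm_toList s (· ≤ ·)).map Fin.val).sum_eq]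
  exact Finset.sum_map_toList s Fin.val


noncomputable def myProd (K : Type*) [CommRing K] (l : List ℕ) : MvPolynomial (ℕ × ℕ) K :=
  ((List.range l.length).map (fun r => (X (r + 1, l.getD r 0) : MvPolynomial (ℕ × ℕ) K))).prod

lemma myProd_append (K : Type*) [CommRing K] (l : List ℕ) (c : ℕ) :
    myProd K (l ++ [c]) = myProd K l * X (l.length + 1, c) := by
  unfold myProd
  rw [List.length_append, List.length_singleton, List.range_succ, List.map_append,
    List.prod_append]
  congr 1
  · congr 1
    apply List.map_congr_left
    intro r hr
    rw [List.mem_range] at hr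
    rw [List.getD_append _ _ _ _ hr]
  · simp [List.getD_append_right]

lemma coe_fix {n : ℕ} (l : List (Fin n)) :
    (l.map (fun j => (j : ℕ) + 1) : List ℕ) = l.map (fun j : Fin n => (j : ℕ) + 1) := by
  induction l with
  | nil => rfl
  | cons x xs ih =>
    show List.map _ (List.cons _ _) = _
    rw [List.map_cons, List.map_cons, ← ih]
    rfl

lemma phiVal_pos (K : Type*) [CommRing K] (n ℓ : ℕ) (J : Finset (Fin n))
    (h : J.card = 1 ∨ 2 ≤ (J.filter (fun j : Fin n => (j : ℕ) + 1 ≤ ℓ)).card) :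
    phiVal K n ℓ J = myProd K ((J.sort (· ≤ ·)).map (fun j : Fin n => (j : ℕ) + 1)) := by
  rw [phiVal]
  simp only [if_pos h]
  rw [← coe_fix]
  rfl

lemma mem_initSet {n : ℕ} {w : Equiv.Perm (Fin n)} {k : ℕ} {j : Fin n} :
    j ∈ initSet w k ↔ ∃ m : Fin n, (m : ℕ) < k ∧ w m = j := by
  simp [initSet]

lemma card_initSet {n : ℕ} (w : Equiv.Perm (Fin n)) {k : ℕ} (hk : k < n) :
    (initSet w k).card = k := by
  rw [initSet, Finset.card_image_of_injective _ w.injective]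
  have h : (Finset.univ.filter (fun i : Fin n => (i : ℕ) < k)) = Finset.Iio (⟨k, hk⟩ : Fin n) := by
    ext j
    simp [Fin.lt_def]
  rw [h, Fin.card_Iio]

lemma initSet_succ {n : ℕ} (w : Equiv.Perm (Fin n)) {k : ℕ} (hk : k < n) :
    initSet w (k + 1) = insert (w ⟨k, hk⟩) (initSet w k) := by
  rw [initSet, initSet, ← Finset.image_insert]
  congr 1
  ext j
  simp only [Finset.mem_filter, Finset.mem_univ, true_and, Finset.mem_insert]
  constructor
  · intro hj
    rcases Nat.lt_succ_iff_lt_or_eq.mp hj with h | h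
    · exact Or.inr h
    · exact Or.inl (Fin.ext h)
  · rintro (rfl | h)
    · exact Nat.lt_succ_self k
    · exact Nat.lt_succ_of_lt h

lemma finsetLE_refl {n : ℕ} (s : Finset (Fin n)) : finsetLE s s :=
  List.forall₂_same.mpr (fun x _ => le_refl x)

lemma not_finsetLE_of_sum_lt {n : ℕ} {s t : Finset (Fin n)}
    (h : t.sum Fin.val < s.sum Fin.val) : ¬ finsetLE s t := by
  intro hF
  have := forall2_sum_le hF
  rw [sort_sum, sort_sum] at this
  omega

lemma helper_lemma (K : Type*) [Field K] {n : ℕ} (ℓ : ℕ) (w : Equiv.Perm (Fin n))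
    (A B C D : PIdx n) (hB : B.1 ∈ Sw w) (hC : C.1 ∉ Sw w) (hD : D.1 ∉ Sw w)
    (ε : K) (hε : ε ≠ 0)
    (hker : X A * X B + ε • (X C * X D) ∈ Fnl K n ℓ) :
    ¬ MonomialFree (Fnlw K n ℓ w) := by
  intro hmf
  have h1 : piw K w (X A * X B + ε • (X C * X D)) ∈ Fnlw K n ℓ w :=
    Ideal.mem_map_of_mem _ hker
  classical
  have h2 : piw K w (X A * X B + ε • (X C * X D)) =
      ε • (X (⟨C, hC⟩ : RIdx n w) * X (⟨D, hD⟩ : RIdx n w)) := by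
    rw [map_add, map_smul, map_mul, map_mul]
    rw [piw, aeval_X, aeval_X, aeval_X, aeval_X]
    rw [dif_pos hB, dif_neg hC, dif_neg hD]
    ring
  rw [h2] at h1
  have h3 : (X (⟨C, hC⟩ : RIdx n w) * X (⟨D, hD⟩ : RIdx n w)) ∈ Fnlw K n ℓ w := by
    have h4 := Ideal.mul_mem_left _ (MvPolynomial.C ε⁻¹) h1
    rwa [smul_eq_C_mul, ← mul_assoc, ← C_mul, inv_mul_cancel₀ hε, C_1, one_mul] at h4
  have h5 : (X (⟨C, hC⟩ : RIdx n w) * X (⟨D, hD⟩ : RIdx n w)) =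
      monomial (Finsupp.single (⟨C, hC⟩ : RIdx n w) 1 + Finsupp.single (⟨D, hD⟩ : RIdx n w) 1)
        (1 : K) := by
    rw [X, X, monomial_mul, one_mul]
  rw [h5] at h3
  exact hmf _ h3

lemma myProd_nil (K : Type*) [CommRing K] : myProd K [] = 1 := by simp [myProd]

lemma myProd_singleton (K : Type*) [CommRing K] (c : ℕ) : myProd K [c] = X (1, c) := by
  have h := myProd_append K [] c
  simpa [myProd_nil] using h

lemma myProd_pair (K : Type*) [CommRing K] (c d : ℕ) :
    myProd K [c, d] = X (1, c) * X (2, d) := by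
  have h := myProd_append K [c] d
  simpa [myProd_singleton] using h

end Stmt8Aux

section MainProof
open Stmt8Aux Finset

theorem stmt8 (K : Type*) [Field K] [CharZero K] (n : ℕ) (hn : 2 ≤ n)
    (w : Equiv.Perm (Fin n)) (hw : w ∈ Tset K n (n - 1)) : descendingProp w := by
  classical
  obtain ⟨hw1, hw2⟩ := hw
  by_contra hc
  rw [descendingProp] at hc
  push_neg at hc
  obtain ⟨i, hti, hin, hlei⟩ := hc
  have hn0 : 0 < n := by omega
  set top : Fin n := ⟨n - 1, by omega⟩ with htopdef
  have htopval : (top : ℕ) = n - 1 := rfl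
  rw [posOfTop, dif_pos hn0] at hti
  have hti' : ((w.symm top) : ℕ) + 1 ≤ i := hti
  have hi1n : i - 1 < n := by omega
  set p : Fin n := ⟨i - 1, hi1n⟩ with hpdef
  have hpval : (p : ℕ) = i - 1 := rfl
  set q : Fin n := ⟨i, hin⟩ with hqdef
  have hqval : (q : ℕ) = i := rfl
  set a := w p with hadef
  set b := w q with hbdef
  have hlei' : (a : ℕ) + 1 ≤ (b : ℕ) + 1 := by
    have h1 : oneLine w i = (a : ℕ) + 1 := by rw [oneLine, dif_pos hi1n]
    have h2 : oneLine w (i + 1) = (b : ℕ) + 1 := by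
      rw [oneLine]
      exact dif_pos hin
    omega
  -- basic inequalities
  have hpq : p ≠ q := by
    intro h
    have : (p : ℕ) = (q : ℕ) := by rw [h]
    rw [hpval, hqval] at this
    omega
  have hwpq : (a : ℕ) < (b : ℕ) := by
    have hne : a ≠ b := fun h => hpq (w.injective h)
    have h2 : (a : ℕ) ≠ (b : ℕ) := fun h => hne (Fin.ext h)
    omega
  have hble : ∀ x : Fin n, x ≤ top := by
    intro x
    rw [Fin.le_def, htopval]
    have := x.isLt
    omega
  have hb_ne_top : b ≠ top := by
    intro h
    have h1 : q = w.symm top := by rw [← h, hbdef, Equiv.symm_apply_apply]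
    have h2 : (q : ℕ) = ((w.symm top) : ℕ) := by rw [h1]
    rw [hqval] at h2
    omega
  have ha_ne_top : a ≠ top := by
    intro h
    have h1 : (b : ℕ) ≤ n - 1 := by
      have h2 := hble b
      rwa [Fin.le_def, htopval] at h2
    have h3 : (a : ℕ) = n - 1 := by rw [h, htopval]
    omega
  have hsmall : ∀ x : Fin n, x ≠ top → (x : ℕ) + 1 ≤ n - 1 := by
    intro x hx
    have h1 := x.isLt
    have h2 : (x : ℕ) ≠ n - 1 := by
      intro h
      exact hx (Fin.ext (by rw [htopval, h]))
    omega
  have htop_not_small : ¬ ((top : ℕ) + 1 ≤ n - 1) := by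
    rw [htopval]
    omega
  have hs_lt : ((w.symm top) : ℕ) < i - 1 := by
    rcases Nat.lt_or_ge ((w.symm top) : ℕ) (i - 1) with h | h
    · exact h
    · exfalso
      have h1 : ((w.symm top) : ℕ) = i - 1 := by omega
      have h2 : w.symm top = p := Fin.ext (by rw [hpval, h1])
      have h3 : top = a := by rw [hadef, ← h2, Equiv.apply_symm_apply]
      exact ha_ne_top h3.symm
  have hi2 : 2 ≤ i := by omega
  have htop_mem : top ∈ initSet w (i - 1) :=
    mem_initSet.mpr ⟨w.symm top, hs_lt, Equiv.apply_symm_apply w top⟩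
  set Y := (initSet w (i - 1)).erase top with hYdef
  have hYtop : top ∉ Y := Finset.notMem_erase _ _
  have hYsub : Y ⊆ initSet w (i - 1) := Finset.erase_subset _ _
  have hins : insert top Y = initSet w (i - 1) := Finset.insert_erase htop_mem
  have ha_not : a ∉ initSet w (i - 1) := by
    intro h
    obtain ⟨m, hm, hma⟩ := mem_initSet.mp h
    have h1 : m = p := w.injective (by rw [hma, hadef])
    rw [h1, hpdef] at hm
    simp at hm
  have hb_not_i : b ∉ initSet w i := by
    intro h
    obtain ⟨m, hm, hmb⟩ := mem_initSet.mp h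
    have h1 : m = q := w.injective (by rw [hmb, hbdef])
    rw [h1, hqdef] at hm
    simp at hm
  have hb_not : b ∉ initSet w (i - 1) := by
    intro h
    obtain ⟨m, hm, hmb⟩ := mem_initSet.mp h
    have h1 : m = q := w.injective (by rw [hmb, hbdef])
    rw [h1, hqdef] at hm
    simp at hm
    omega
  have haY : a ∉ Y := fun h => ha_not (hYsub h)
  have hbY : b ∉ Y := fun h => hb_not (hYsub h)
  have hab_ne : a ≠ b := fun h => hpq (w.injective h)
  have hIi : initSet w i = insert a (initSet w (i - 1)) := by
    have h1 : i - 1 + 1 = i := by omega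
    rw [← h1, initSet_succ w hi1n, h1]
  have hcard1 : (initSet w (i - 1)).card = i - 1 := card_initSet w hi1n
  have hcardY : Y.card = i - 2 := by
    rw [hYdef, Finset.card_erase_of_mem htop_mem, hcard1]
    omega
  rcases Y.eq_empty_or_nonempty with hYe | hYne
  · -- small case i = 2
    have hieq : i = 2 := by
      rw [hYe, Finset.card_empty] at hcardY
      omega
    subst hieq
    have hins1 : initSet w 1 = ({top} : Finset (Fin n)) := by
      rw [show initSet w 1 = initSet w (2 - 1) from rfl, ← hins, hYe]
      simp
    have hIi2 : initSet w 2 = insert a ({top} : Finset (Fin n)) := by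
      rw [hIi, show initSet w (2 - 1) = initSet w 1 from rfl, hins1]
    have ne_univ_of : ∀ (s : Finset (Fin n)) (x : Fin n), x ∉ s → s ≠ Finset.univ := by
      intro s x hx h
      rw [h] at hx
      exact hx (Finset.mem_univ x)
    have htopA : top ∉ ({a} : Finset (Fin n)) := by
      simp only [Finset.mem_singleton]
      exact fun h => ha_ne_top h.symm
    have ha_notB : a ∉ insert top ({b} : Finset (Fin n)) := by
      simp only [Finset.mem_insert, Finset.mem_singleton]
      push_neg
      exact ⟨ha_ne_top, hab_ne⟩
    have htopB : top ∉ ({b} : Finset (Fin n)) := by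
      simp only [Finset.mem_singleton]
      exact fun h => hb_ne_top h.symm
    have hb_notA : b ∉ ({a} : Finset (Fin n)) := by
      simp only [Finset.mem_singleton]
      exact fun h => hab_ne h.symm
    have htopC : top ∉ insert b ({a} : Finset (Fin n)) := by
      simp only [Finset.mem_insert, Finset.mem_singleton]
      push_neg
      exact ⟨fun h => hb_ne_top h.symm, fun h => ha_ne_top h.symm⟩
    have ha_notD : a ∉ ({top} : Finset (Fin n)) := by
      simp only [Finset.mem_singleton]
      exact ha_ne_top
    set A : PIdx n := ⟨{a}, ⟨Finset.singleton_nonempty _, ne_univ_of _ top htopA⟩⟩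
      with hAdef
    set B : PIdx n := ⟨insert top {b}, ⟨Finset.insert_nonempty _ _,
      ne_univ_of _ a ha_notB⟩⟩ with hBdef
    set C : PIdx n := ⟨insert b {a}, ⟨Finset.insert_nonempty _ _,
      ne_univ_of _ top htopC⟩⟩ with hCdef
    set D : PIdx n := ⟨{top}, ⟨Finset.singleton_nonempty _, ne_univ_of _ a ha_notD⟩⟩
      with hDdef
    have hab_le : a ≤ b := by
      rw [Fin.le_def]
      omega
    have hsortB : (insert top ({b} : Finset (Fin n))).sort (· ≤ ·) = [b, top] := by
      rw [sort_insert_max (fun x _ => hble x) htopB, Finset.sort_singleton]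
      rfl
    have hsortC : (insert b ({a} : Finset (Fin n))).sort (· ≤ ·) = [a, b] := by
      rw [sort_insert_max (fun x hx => by
        rw [Finset.mem_singleton] at hx
        subst hx
        exact hab_le) hb_notA, Finset.sort_singleton]
      rfl
    have hpair : insert a ({top} : Finset (Fin n)) = insert top ({a} : Finset (Fin n)) :=
      Finset.pair_comm a top
    have hsortD2 : (insert a ({top} : Finset (Fin n))).sort (· ≤ ·) = [a, top] := by
      rw [hpair, sort_insert_max (fun x _ => hble x) htopA, Finset.sort_singleton]
      rfl
    -- Sw facts
    have hD_not : D.1 ∉ Sw w := by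
      simp only [Sw, Set.mem_setOf_eq, not_not, hDdef]
      rw [Finset.card_singleton, hins1]
      exact finsetLE_refl _
    have hC_not : C.1 ∉ Sw w := by
      simp only [Sw, Set.mem_setOf_eq, not_not, hCdef]
      rw [Finset.card_insert_of_notMem hb_notA, Finset.card_singleton, hIi2, finsetLE,
        hsortC, hsortD2]
      exact List.Forall₂.cons (le_refl a) (List.Forall₂.cons (hble b) List.Forall₂.nil)
    have hB_in : B.1 ∈ Sw w := by
      simp only [Sw, Set.mem_setOf_eq, hBdef]
      rw [Finset.card_insert_of_notMem htopB, Finset.card_singleton, hIi2, finsetLE,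
        hsortB, hsortD2]
      intro hF
      rw [List.forall₂_cons] at hF
      have hba := hF.1
      rw [Fin.le_def] at hba
      omega
    -- phiVal computations
    have hvalA : phiVal K n (n - 1) {a} = X (1, (a : ℕ) + 1) := by
      rw [phiVal_pos K n (n - 1) _ (Or.inl (Finset.card_singleton a)),
        Finset.sort_singleton, List.map_singleton, myProd_singleton]
    have hvalD : phiVal K n (n - 1) {top} = X (1, (top : ℕ) + 1) := by
      rw [phiVal_pos K n (n - 1) _ (Or.inl (Finset.card_singleton top)),
        Finset.sort_singleton, List.map_singleton, myProd_singleton]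
    have hCfilter : (insert b ({a} : Finset (Fin n))).filter
        (fun j : Fin n => (j : ℕ) + 1 ≤ n - 1) = insert b {a} := by
      apply Finset.filter_true_of_mem
      intro x hx
      rcases Finset.mem_insert.mp hx with rfl | hx'
      · exact hsmall _ hb_ne_top
      · rw [Finset.mem_singleton] at hx'
        subst hx'
        exact hsmall _ ha_ne_top
    have hcondC : (insert b ({a} : Finset (Fin n))).card = 1 ∨
        2 ≤ ((insert b ({a} : Finset (Fin n))).filter
          (fun j : Fin n => (j : ℕ) + 1 ≤ n - 1)).card := by
      right
      rw [hCfilter, Finset.card_insert_of_notMem hb_notA, Finset.card_singleton]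
    have hvalC : phiVal K n (n - 1) (insert b {a}) =
        X (1, (a : ℕ) + 1) * X (2, (b : ℕ) + 1) := by
      rw [phiVal_pos K n (n - 1) _ hcondC, hsortC]
      rw [show ([a, b].map (fun j : Fin n => (j : ℕ) + 1)) = [(a : ℕ) + 1, (b : ℕ) + 1]
        from rfl, myProd_pair]
    have hcondB : ¬ ((insert top ({b} : Finset (Fin n))).card = 1 ∨
        2 ≤ ((insert top ({b} : Finset (Fin n))).filter
          (fun j : Fin n => (j : ℕ) + 1 ≤ n - 1)).card) := by
      push_neg
      constructor
      · rw [Finset.card_insert_of_notMem htopB, Finset.card_singleton]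
        omega
      · rw [Finset.filter_insert, if_neg htop_not_small]
        have hf : ({b} : Finset (Fin n)).filter
            (fun j : Fin n => (j : ℕ) + 1 ≤ n - 1) = {b} := by
          apply Finset.filter_true_of_mem
          intro x hx
          rw [Finset.mem_singleton] at hx
          subst hx
          exact hsmall _ hb_ne_top
        rw [hf, Finset.card_singleton]
        omega
    have hvalB : phiVal K n (n - 1) (insert top {b}) =
        -(X (2, (b : ℕ) + 1) * X (1, (top : ℕ) + 1)) := by
      rw [phiVal]
      simp only [if_neg hcondB]
      rw [hsortB]
      norm_num [swap12, List.range_succ]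
    -- kernel membership
    have hker : X A * X B + (1 : K) • (X C * X D) ∈ Fnl K n (n - 1) := by
      rw [Fnl, RingHom.mem_ker]
      rw [map_add, map_smul, map_mul, map_mul]
      rw [phiMap, aeval_X, aeval_X, aeval_X, aeval_X]
      simp only [hAdef, hBdef, hCdef, hDdef]
      rw [hvalA, hvalB, hvalC, hvalD, one_smul]
      ring
    exact helper_lemma K (n - 1) w A B C D hB_in hC_not hD_not (1 : K)
      one_ne_zero hker hw2
  · -- general case
    have hY1 : 1 ≤ Y.card := Finset.card_pos.mpr hYne
    -- the four sets
    have htopbY : top ∉ insert b Y := by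
      simp only [Finset.mem_insert]
      push_neg
      exact ⟨fun h => hb_ne_top h.symm, hYtop⟩
    have htopaY : top ∉ insert a Y := by
      simp only [Finset.mem_insert]
      push_neg
      exact ⟨fun h => ha_ne_top h.symm, hYtop⟩
    have hD_eq : initSet w i = insert top (insert a Y) := by
      rw [hIi, ← hins, Finset.insert_comm]
    -- subtype elements
    have ne_univ_of : ∀ (s : Finset (Fin n)) (x : Fin n), x ∉ s → s ≠ Finset.univ := by
      intro s x hx h
      rw [h] at hx
      exact hx (Finset.mem_univ x)
    have ha_notB : a ∉ insert top (insert b Y) := by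
      simp only [Finset.mem_insert]
      push_neg
      exact ⟨ha_ne_top, hab_ne, haY⟩
    set A : PIdx n := ⟨insert a Y, ⟨Finset.insert_nonempty _ _,
      ne_univ_of _ top htopaY⟩⟩ with hAdef
    set B : PIdx n := ⟨insert top (insert b Y), ⟨Finset.insert_nonempty _ _,
      ne_univ_of _ a ha_notB⟩⟩ with hBdef
    set C : PIdx n := ⟨insert b Y, ⟨Finset.insert_nonempty _ _,
      ne_univ_of _ top htopbY⟩⟩ with hCdef
    set D : PIdx n := ⟨initSet w i, ⟨⟨a, by rw [hIi]; exact Finset.mem_insert_self _ _⟩,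
      ne_univ_of _ b hb_not_i⟩⟩ with hDdef
    -- Sw facts
    have hD_not : D.1 ∉ Sw w := by
      simp only [Sw, Set.mem_setOf_eq, not_not, hDdef]
      rw [card_initSet w hin]
      exact finsetLE_refl _
    have hC_not : C.1 ∉ Sw w := by
      simp only [Sw, Set.mem_setOf_eq, not_not, hCdef]
      have hCcard : (insert b Y).card = i - 1 := by
        rw [Finset.card_insert_of_notMem hbY, hcardY]
        omega
      rw [hCcard, finsetLE, ← hins, sort_insert_max (fun x _ => hble x) hYtop,
        sort_insert_eq_orderedInsert hbY]
      exact forall2_orderedInsert top b (hble b) _ (Finset.pairwise_sort _ _)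
        (fun y _ => hble y)
    have hB_in : B.1 ∈ Sw w := by
      simp only [Sw, Set.mem_setOf_eq, hBdef]
      have hBcard : (insert top (insert b Y)).card = i := by
        rw [Finset.card_insert_of_notMem htopbY, Finset.card_insert_of_notMem hbY, hcardY]
        omega
      rw [hBcard]
      apply not_finsetLE_of_sum_lt
      rw [hD_eq, Finset.sum_insert htopaY, Finset.sum_insert haY,
        Finset.sum_insert htopbY, Finset.sum_insert hbY]
      omega
    -- phiVal computations
    have hAfilter : (insert a Y).filter (fun j : Fin n => (j : ℕ) + 1 ≤ n - 1) = insert a Y := by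
      apply Finset.filter_true_of_mem
      intro x hx
      rcases Finset.mem_insert.mp hx with rfl | hx'
      · exact hsmall _ ha_ne_top
      · exact hsmall _ (fun h => hYtop (h ▸ hx'))
    have hCfilter : (insert b Y).filter (fun j : Fin n => (j : ℕ) + 1 ≤ n - 1) = insert b Y := by
      apply Finset.filter_true_of_mem
      intro x hx
      rcases Finset.mem_insert.mp hx with rfl | hx'
      · exact hsmall _ hb_ne_top
      · exact hsmall _ (fun h => hYtop (h ▸ hx'))
    have hcondA : (insert a Y).card = 1 ∨
        2 ≤ ((insert a Y).filter (fun j : Fin n => (j : ℕ) + 1 ≤ n - 1)).card := by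
      right
      rw [hAfilter, Finset.card_insert_of_notMem haY]
      omega
    have hcondC : (insert b Y).card = 1 ∨
        2 ≤ ((insert b Y).filter (fun j : Fin n => (j : ℕ) + 1 ≤ n - 1)).card := by
      right
      rw [hCfilter, Finset.card_insert_of_notMem hbY]
      omega
    have hcondB : (insert top (insert b Y)).card = 1 ∨
        2 ≤ ((insert top (insert b Y)).filter
          (fun j : Fin n => (j : ℕ) + 1 ≤ n - 1)).card := by
      right
      rw [Finset.filter_insert, if_neg htop_not_small, hCfilter,
        Finset.card_insert_of_notMem hbY]
      omega
    have hcondD : (insert top (insert a Y)).card = 1 ∨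
        2 ≤ ((insert top (insert a Y)).filter
          (fun j : Fin n => (j : ℕ) + 1 ≤ n - 1)).card := by
      right
      rw [Finset.filter_insert, if_neg htop_not_small, hAfilter,
        Finset.card_insert_of_notMem haY]
      omega
    set LA : List ℕ := ((insert a Y).sort (· ≤ ·)).map (fun j : Fin n => (j : ℕ) + 1)
      with hLAdef
    set LC : List ℕ := ((insert b Y).sort (· ≤ ·)).map (fun j : Fin n => (j : ℕ) + 1)
      with hLCdef
    have hlen : LA.length = LC.length := by
      rw [hLAdef, hLCdef, List.length_map, List.length_map, Finset.length_sort,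
        Finset.length_sort, Finset.card_insert_of_notMem haY,
        Finset.card_insert_of_notMem hbY]
    have hvalA : phiVal K n (n - 1) (insert a Y) = myProd K LA :=
      phiVal_pos K n (n - 1) _ hcondA
    have hvalC : phiVal K n (n - 1) (insert b Y) = myProd K LC :=
      phiVal_pos K n (n - 1) _ hcondC
    have hvalB : phiVal K n (n - 1) (insert top (insert b Y)) =
        myProd K LC * X (LC.length + 1, (top : ℕ) + 1) := by
      rw [phiVal_pos K n (n - 1) _ hcondB,
        sort_insert_max (fun x _ => hble x) htopbY, List.map_append]
      exact myProd_append K LC ((top : ℕ) + 1)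
    have hvalD : phiVal K n (n - 1) (insert top (insert a Y)) =
        myProd K LA * X (LA.length + 1, (top : ℕ) + 1) := by
      rw [phiVal_pos K n (n - 1) _ hcondD,
        sort_insert_max (fun x _ => hble x) htopaY, List.map_append]
      exact myProd_append K LA ((top : ℕ) + 1)
    -- kernel membership
    have hker : X A * X B + (-1 : K) • (X C * X D) ∈ Fnl K n (n - 1) := by
      rw [Fnl, RingHom.mem_ker]
      rw [map_add, map_smul, map_mul, map_mul]
      rw [phiMap, aeval_X, aeval_X, aeval_X, aeval_X]
      simp only [hAdef, hBdef, hCdef, hDdef, hD_eq]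
      rw [hvalA, hvalB, hvalC, hvalD, hlen, neg_one_smul]
      ring
    exact helper_lemma K (n - 1) w A B C D hB_in hC_not hD_not (-1 : K)
      (by norm_num) hker hw2

end MainProof
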